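/- For any finite nonincreasing sequence of positive reals w_0 ≥ w_1 ≥ ... ≥ w_{n-1} with sum W, we have Σ_i w_i ⌊log₂(i+1)⌋ ≤ Σ_i w_i log₂(W / w_i). -/
import Mathlib


open Finset Real

/-- For any finite nonincreasing sequence of positive reals `w₀ ≥ w₁ ≥ ...` with sum `W`,
`Σ_i w_i ⌊log₂(i+1)⌋ ≤ Σ_i w_i log₂(W / w_i)`. -/
theorem sum_floor_log_rank_le_entropy (n : ℕ) (w : Fin n → ℝ)
    (hpos : ∀ i, 0 < w i) (hmono : ∀ i j : Fin n, i ≤ j → w j ≤ w i) :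
    ∑ i : Fin n, w i * (⌊Real.logb 2 (((i : ℕ) : ℝ) + 1)⌋ : ℝ) ≤
      ∑ i : Fin n, w i * Real.logb 2 ((∑ j : Fin n, w j) / w i) := by
  apply Finset.sum_le_sum
  intro i _
  have hwi := hpos i
  -- key: (i+1) * w i ≤ ∑ j, w j
  have key : (((i : ℕ) : ℝ) + 1) * w i ≤ ∑ j, w j := by
    have h1 : ∑ j ∈ Finset.univ.filter (· ≤ i), w i ≤
        ∑ j ∈ Finset.univ.filter (· ≤ i), w j :=
      Finset.sum_le_sum fun j hj => hmono j i (Finset.mem_filter.mp hj).2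
    have h2 : ∑ j ∈ Finset.univ.filter (· ≤ i), w j ≤ ∑ j, w j :=
      Finset.sum_le_sum_of_subset_of_nonneg (Finset.filter_subset _ _)
        (fun j _ _ => (hpos j).le)
    have hcard : (Finset.univ.filter (· ≤ i)).card = (i : ℕ) + 1 := by
      have : Finset.univ.filter (· ≤ i) = Finset.Iic i := by
        ext j; simp
      rw [this, Fin.card_Iic]
    calc (((i : ℕ) : ℝ) + 1) * w i
        = ∑ j ∈ Finset.univ.filter (· ≤ i), w i := by
          rw [Finset.sum_const, hcard]; push_cast; ring
      _ ≤ ∑ j, w j := h1.trans h2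
  have hle : (((i : ℕ) : ℝ) + 1) ≤ (∑ j, w j) / w i := by
    rw [le_div_iff₀ hwi]; exact key
  have hfloor : (⌊Real.logb 2 (((i : ℕ) : ℝ) + 1)⌋ : ℝ) ≤
      Real.logb 2 ((∑ j, w j) / w i) := by
    refine (Int.floor_le _).trans ?_
    exact Real.logb_le_logb_of_le (by norm_num) (by positivity) hle
  exact mul_le_mul_of_nonneg_left hfloor hwi.le
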